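/- For positive integers s, n and 1 ≤ j ≤ n-1, the Gaussian binomial coefficient qbinom(sn, j) is divisible by Φ_n(q) in ℤ[q]. -/

import Mathlib

open Polynomial Finset

/-- The variable `q` as a rational function over `ℚ`. -/
noncomputable def qv : RatFunc ℚ := RatFunc.X

/-- The q-Pochhammer symbol `(x; t)_k = (1-x)(1-xt)⋯(1-xt^{k-1})`. -/
noncomputable def qPochAt (x t : RatFunc ℚ) (k : ℕ) : RatFunc ℚ :=
  ∏ i ∈ Finset.range k, (1 - x * t ^ i)

/-- The Gaussian binomial coefficient `[α choose k]_t = (t^{α-k+1}; t)_k / (t; t)_k`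
with integer upper argument. -/
noncomputable def qbinomAt (t : RatFunc ℚ) (α : ℤ) (k : ℕ) : RatFunc ℚ :=
  (∏ i ∈ Finset.range k, (1 - t ^ (α - k + 1 + i))) /
    (∏ i ∈ Finset.range k, (1 - t ^ (i + 1)))

/-- The Gaussian binomial coefficient in the variable `q`. -/
noncomputable def qbinom (α : ℤ) (k : ℕ) : RatFunc ℚ := qbinomAt qv α k

/-- The image of an integer polynomial in `RatFunc ℚ`. -/
noncomputable def toF (g : Polynomial ℤ) : RatFunc ℚ :=
  Polynomial.aeval (RatFunc.X : RatFunc ℚ) g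

/-- `A ≡ B (mod Φ_n(q)^m)` in the localization of `ℤ[q]` at polynomials coprime
to `Φ_n`: there are `f g : ℤ[q]` with `Φ_n ∤ g` and `(A - B) * g = Φ_n^m * f`. -/
def modCong (n m : ℕ) (A B : RatFunc ℚ) : Prop :=
  ∃ f g : Polynomial ℤ, ¬ (Polynomial.cyclotomic n ℤ ∣ g) ∧
    (A - B) * toF g = toF ((Polynomial.cyclotomic n ℤ) ^ m * f)

/-- The q-integer `[m]_q = (1-q^m)/(1-q)`. -/
noncomputable def qint (m : ℤ) : RatFunc ℚ := (1 - qv ^ m) / (1 - qv)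

-- auxiliary lemmas


lemma toF_ringhom_eq :
    ((Polynomial.aeval (RatFunc.X : RatFunc ℚ)).toRingHom : Polynomial ℤ →+* RatFunc ℚ)
      = (algebraMap (Polynomial ℚ) (RatFunc ℚ)).comp
          (Polynomial.mapRingHom (Int.castRingHom ℚ)) := by
  apply Polynomial.ringHom_ext
  · intro a
    simp only [AlgHom.toRingHom_eq_coe, RingHom.coe_coe, RingHom.coe_comp, Function.comp_apply,
      coe_mapRingHom, Polynomial.map_C]
    rw [Polynomial.aeval_C]
    rw [show Polynomial.C ((Int.castRingHom ℚ) a) = ((a : ℚ[X])) by simp]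
    rw [map_intCast]
    simp
  · simp [RatFunc.algebraMap_X]

lemma toF_eq (g : Polynomial ℤ) :
    toF g = algebraMap (Polynomial ℚ) (RatFunc ℚ) (g.map (Int.castRingHom ℚ)) := by
  have := congrArg (fun F : Polynomial ℤ →+* RatFunc ℚ => F g) toF_ringhom_eq
  simpa [toF] using this

lemma toF_injective : Function.Injective toF := by
  intro a b h
  rw [toF_eq, toF_eq] at h
  have h2 := RatFunc.algebraMap_injective (K := ℚ) h
  exact Polynomial.map_injective _ (fun x y hxy => Int.cast_injective hxy) h2

lemma card_filter_dvd (d a j : ℕ) :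
    ((Finset.range j).filter (fun i => d ∣ a + 1 + i)).card = (a + j) / d - a / d := by
  induction j with
  | zero => simp
  | succ j ih =>
    have hle : a / d ≤ (a + j) / d := Nat.div_le_div_right (by omega)
    have hsd : (a + j + 1) / d = (a + j) / d + if d ∣ a + j + 1 then 1 else 0 :=
      Nat.succ_div
    have hAJ : a + (j + 1) = a + j + 1 := by omega
    rw [hAJ, Finset.range_add_one, Finset.filter_insert]
    by_cases h : d ∣ a + 1 + j
    · rw [if_pos h, Finset.card_insert_of_notMem (by simp), ih]
      have h' : d ∣ a + j + 1 := by rwa [show a + j + 1 = a + 1 + j by ring]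
      rw [if_pos h'] at hsd
      omega
    · rw [if_neg h, ih]
      have h' : ¬ d ∣ a + j + 1 := by rwa [show a + j + 1 = a + 1 + j by ring]
      rw [if_neg h'] at hsd
      omega

lemma count_bind_divisors (d a j : ℕ) :
    Multiset.count d ((Finset.range j).val.bind (fun i => (a + 1 + i).divisors.val))
      = (a + j) / d - a / d := by
  rw [Multiset.count_bind]
  have h1 : ∀ i : ℕ, Multiset.count d (a + 1 + i).divisors.val
      = if d ∣ a + 1 + i then 1 else 0 := by
    intro i
    rw [Multiset.count_eq_of_nodup (a + 1 + i).divisors.nodup]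
    simp [Nat.mem_divisors, show a + 1 + i ≠ 0 by omega]
  rw [show ((Finset.range j).val.map
        (fun i => Multiset.count d (a + 1 + i).divisors.val))
      = ((Finset.range j).val.map (fun i => if d ∣ a + 1 + i then 1 else 0)) from
    Multiset.map_congr rfl (fun i _ => h1 i)]
  have h2 : (Multiset.map (fun i => if d ∣ a + 1 + i then 1 else 0) (Finset.range j).val).sum
      = ∑ i ∈ Finset.range j, (if d ∣ a + 1 + i then 1 else 0) := rfl
  rw [h2, ← Finset.card_filter, card_filter_dvd]

lemma prod_bind_cyclotomic (a j : ℕ) :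
    ((((Finset.range j).val.bind (fun i => (a + 1 + i).divisors.val)).map
        (fun d => cyclotomic d ℤ)).prod)
      = ∏ i ∈ Finset.range j, (X ^ (a + 1 + i) - 1) := by
  rw [Multiset.map_bind, Multiset.prod_bind]
  rw [Finset.prod_eq_multiset_prod]
  congr 1
  apply Multiset.map_congr rfl
  intro i _
  rw [← Finset.prod_eq_multiset_prod]
  exact prod_cyclotomic_eq_X_pow_sub_one (by omega) ℤ

lemma key_dvd (s n j : ℕ) (hs : 1 ≤ s) (hj1 : 1 ≤ j) (hj2 : j ≤ n - 1) (hn : 1 ≤ n) :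
    cyclotomic n ℤ * ∏ i ∈ Finset.range j, (X ^ (0 + 1 + i) - 1) ∣
      ∏ i ∈ Finset.range j, (X ^ (s * n - j + 1 + i) - 1) := by
  have hjn : j < n := by omega
  have hjsn : j ≤ s * n := le_trans (le_of_lt hjn) (Nat.le_mul_of_pos_left n hs)
  obtain ⟨t, ht⟩ : ∃ t, t = s * n - j := ⟨_, rfl⟩
  have hsub : (s - 1) * n = s * n - n := by rw [Nat.sub_mul, one_mul]
  have hnsn : n ≤ s * n := Nat.le_mul_of_pos_left n hs
  have htj : t + j = s * n := by omega
  have ht2 : t = (n - j) + (s - 1) * n := by omega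
  have hdivt : t / n = s - 1 := by
    rw [ht2, Nat.add_mul_div_right _ _ (show 0 < n by omega),
      Nat.div_eq_of_lt (by omega), Nat.zero_add]
  have hdivtj : (t + j) / n = s := by rw [htj, Nat.mul_div_cancel _ (by omega)]
  rw [← ht]
  set MD := (Finset.range j).val.bind (fun i => (0 + 1 + i).divisors.val) with hMD
  set MN := (Finset.range j).val.bind (fun i => (t + 1 + i).divisors.val) with hMN
  have hle : n ::ₘ MD ≤ MN := by
    rw [Multiset.le_iff_count]
    intro d
    rw [Multiset.count_cons, hMD, hMN, count_bind_divisors, count_bind_divisors]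
    have hzj : (0 + j) / d = j / d := by rw [Nat.zero_add]
    have hz : (0 : ℕ) / d = 0 := Nat.zero_div d
    by_cases hd : d = n
    · rw [hd] at hzj hz ⊢
      have h1 : j / n = 0 := Nat.div_eq_of_lt hjn
      rw [if_pos rfl]
      omega
    · simp only [if_neg hd]
      have := Nat.add_div_le_add_div t j d
      omega
  have hdvd : ((n ::ₘ MD).map (fun d => cyclotomic d ℤ)).prod ∣
      (MN.map (fun d => cyclotomic d ℤ)).prod :=
    Multiset.prod_dvd_prod_of_le (Multiset.map_le_map hle)
  rwa [Multiset.map_cons, Multiset.prod_cons, hMD, hMN,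
    prod_bind_cyclotomic, prod_bind_cyclotomic] at hdvd

lemma toF_mul (a b : Polynomial ℤ) : toF (a * b) = toF a * toF b := by
  simp [toF]

/-- For `s ≥ 1` and `1 ≤ j ≤ n-1`, `Φ_n(q)` divides `[sn choose j]_q` in `ℤ[q]`. -/
theorem stmt4 (s n j : ℕ) (hs : 1 ≤ s) (hj1 : 1 ≤ j) (hj2 : j ≤ n - 1) (hn : 1 ≤ n) :
    ∃ f : Polynomial ℤ, qbinom ((s * n : ℕ) : ℤ) j = toF (Polynomial.cyclotomic n ℤ * f) := by
  have hjn : j < n := by omega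
  have hjsn : j ≤ s * n := le_trans (le_of_lt hjn) (Nat.le_mul_of_pos_left n hs)
  set t := s * n - j with ht
  obtain ⟨f, hf⟩ := key_dvd s n j hs hj1 hj2 hn
  set N : Polynomial ℤ := ∏ i ∈ Finset.range j, (1 - X ^ (t + 1 + i)) with hN
  set D : Polynomial ℤ := ∏ i ∈ Finset.range j, (1 - X ^ (0 + 1 + i)) with hD
  have hNeq : N = (-1) ^ j * ∏ i ∈ Finset.range j, (X ^ (t + 1 + i) - 1) := by
    calc N = ∏ i ∈ Finset.range j, (-1) * (X ^ (t + 1 + i) - 1) :=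
          Finset.prod_congr rfl (fun i _ => by ring)
      _ = (∏ _i ∈ Finset.range j, (-1 : Polynomial ℤ)) *
            ∏ i ∈ Finset.range j, (X ^ (t + 1 + i) - 1) := Finset.prod_mul_distrib
      _ = (-1) ^ j * ∏ i ∈ Finset.range j, (X ^ (t + 1 + i) - 1) := by
          rw [Finset.prod_const, Finset.card_range]
  have hDeq : D = (-1) ^ j * ∏ i ∈ Finset.range j, (X ^ (0 + 1 + i) - 1) := by
    calc D = ∏ i ∈ Finset.range j, (-1) * (X ^ (0 + 1 + i) - 1) :=
          Finset.prod_congr rfl (fun i _ => by ring)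
      _ = (∏ _i ∈ Finset.range j, (-1 : Polynomial ℤ)) *
            ∏ i ∈ Finset.range j, (X ^ (0 + 1 + i) - 1) := Finset.prod_mul_distrib
      _ = (-1) ^ j * ∏ i ∈ Finset.range j, (X ^ (0 + 1 + i) - 1) := by
          rw [Finset.prod_const, Finset.card_range]
  have hNDf : N = (cyclotomic n ℤ * f) * D := by
    rw [hNeq, hDeq, hf]; ring
  have hDne : D ≠ 0 := by
    rw [hD]
    apply Finset.prod_ne_zero_iff.mpr
    intro i _ hzero
    have h := congrArg (fun p : Polynomial ℤ => p.coeff (0 + 1 + i)) hzero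
    simp [Polynomial.coeff_one] at h
  have htoF0 : toF (0 : Polynomial ℤ) = 0 := by simp [toF]
  have htoFD : toF D ≠ 0 := fun h => hDne (toF_injective (h.trans htoF0.symm))
  refine ⟨f, ?_⟩
  have hnum : (∏ i ∈ Finset.range j, (1 - qv ^ (((s * n : ℕ) : ℤ) - j + 1 + i))) = toF N := by
    rw [hN, toF, map_prod]
    apply Finset.prod_congr rfl
    intro i _
    have hexp : ((s * n : ℕ) : ℤ) - j + 1 + i = ((t + 1 + i : ℕ) : ℤ) := by
      push_cast; omega
    rw [hexp, map_sub, map_one, map_pow, aeval_X, ← zpow_natCast]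
    rfl
  have hden : (∏ i ∈ Finset.range j, (1 - qv ^ (i + 1))) = toF D := by
    rw [hD, toF, map_prod]
    apply Finset.prod_congr rfl
    intro i _
    rw [map_sub, map_one, map_pow, aeval_X, show 0 + 1 + i = i + 1 by omega]
    rfl
  rw [qbinom, qbinomAt, hnum, hden, hNDf, toF_mul]
  exact mul_div_cancel_right₀ _ htoFD
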